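/- There exists a constant C > 0 with the following property: for every even integer n ≥ 2 and all primes p, q satisfying hₙ/hₙ₋₁ < (log q)/(log p) < hₙ₊₁/hₙ, the set 𝒱 = {(x₁,…,xₙ₊₁) ∈ ℕ₀^{n+1} : Σᵢ₌₁^{n+1} xᵢ·hᵢ = hₙ₊₁ and Σᵢ₌₁^{n+1} xᵢ·hᵢ₋₁ = hₙ} of factorization vectors of αₙ = p^{hₙ₊₁}/q^{hₙ} is finite and satisfies log(#𝒱) ≤ C·(log hₙ₊₁)². -/

import Mathlib

open Real Finset

/-- `𝒩` is encoded by pairs `x : ℕ × ℕ` with `x ≠ (0,0)`.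
The upper set `𝒰(ξ) = {(a,b) ∈ 𝒩 : a > bξ}`. -/
def Uset (ξ : ℝ) : Set (ℕ × ℕ) := {x | x ≠ (0, 0) ∧ (x.2 : ℝ) * ξ < (x.1 : ℝ)}

/-- The lower set `ℒ(ξ) = {(a,b) ∈ 𝒩 : a < bξ}`. -/
def Lset (ξ : ℝ) : Set (ℕ × ℕ) := {x | x ≠ (0, 0) ∧ (x.1 : ℝ) < (x.2 : ℝ) * ξ}

/-- `𝒢 = {(a,b) ∈ 𝒩 : gcd(a,b) = 1}`. -/
def Gset : Set (ℕ × ℕ) := {x | x ≠ (0, 0) ∧ Nat.Coprime x.1 x.2}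

/-- `𝒰₁(ξ)`: elements `(a,b)` of `𝒰(ξ)` with `a/b ≤ m/n` (by cross multiplication)
for every `(m,n) ∈ 𝒰(ξ)` with `m ≤ a`. -/
def U1 (ξ : ℝ) : Set (ℕ × ℕ) :=
  {x | x ∈ Uset ξ ∧ ∀ y ∈ Uset ξ, y.1 ≤ x.1 → x.1 * y.2 ≤ y.1 * x.2}

/-- `𝒰₂(ξ)`: elements `(a,b)` of `𝒰(ξ)` with `a/b ≤ m/n` for every `(m,n) ∈ 𝒰(ξ)`
with `n ≤ b`. -/
def U2 (ξ : ℝ) : Set (ℕ × ℕ) :=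
  {x | x ∈ Uset ξ ∧ ∀ y ∈ Uset ξ, y.2 ≤ x.2 → x.1 * y.2 ≤ y.1 * x.2}

/-- `ℒ₁(ξ)`: elements `(a,b)` of `ℒ(ξ)` with `a/b ≥ m/n` for every `(m,n) ∈ ℒ(ξ)`
with `m ≤ a`. -/
def L1 (ξ : ℝ) : Set (ℕ × ℕ) :=
  {x | x ∈ Lset ξ ∧ ∀ y ∈ Lset ξ, y.1 ≤ x.1 → y.1 * x.2 ≤ x.1 * y.2}

/-- `ℒ₂(ξ)`: elements `(a,b)` of `ℒ(ξ)` with `a/b ≥ m/n` for every `(m,n) ∈ ℒ(ξ)`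
with `n ≤ b`. -/
def L2 (ξ : ℝ) : Set (ℕ × ℕ) :=
  {x | x ∈ Lset ξ ∧ ∀ y ∈ Lset ξ, y.2 ≤ x.2 → y.1 * x.2 ≤ x.1 * y.2}

/-- `(a,b)` is an upper or lower best approximation for `ξ`. -/
def BestApprox (ξ : ℝ) (x : ℕ × ℕ) : Prop :=
  x ∈ Gset ∩ U1 ξ ∨ x ∈ Gset ∩ L2 ξ

/-- A factorization of a positive rational `α ≠ 1`: a tuple of fractions `r n / s n` of
positive integers, none equal to `1`, with `gcd (r m) (s n) = 1` for all `m, n`, whose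
product is `α`. -/
def IsFactorization (α : ℚ) {N : ℕ} (r s : Fin N → ℕ) : Prop :=
  (∀ n, 0 < r n) ∧ (∀ n, 0 < s n) ∧ (∀ n, (r n : ℚ) / (s n : ℚ) ≠ 1) ∧
    (∀ m n, Nat.Coprime (r m) (s n)) ∧ (∏ n, (r n : ℚ) / (s n : ℚ)) = α

/-- The measure function `f_A(t) = (Σₙ m(rₙ/sₙ)^t)^{1/t}` of a factorization, where
`m(rₙ/sₙ) = log max(rₙ, sₙ)`. -/
noncomputable def fmeas {N : ℕ} (r s : Fin N → ℕ) (t : ℝ) : ℝ :=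
  (∑ n, (Real.log ((max (r n) (s n) : ℕ) : ℝ)) ^ t) ^ (1 / t)

/-- Theorem `GoldenBound`: there is `C > 0` such that for every even
`n ≥ 2` and primes `p`, `q` with `hₙ/hₙ₋₁ < log q / log p < hₙ₊₁/hₙ`, the set `𝒱` of
factorization vectors of `αₙ = p^{hₙ₊₁}/q^{hₙ}` is finite with
`log #𝒱 ≤ C (log hₙ₊₁)²`. -/
lemma two_pow_le_fib (k : ℕ) : 2 ^ k ≤ Nat.fib (2 * k + 1) := by
  induction k with
  | zero => simp
  | succ k ih =>
    have h1 : Nat.fib (2 * k + 1) ≤ Nat.fib (2 * k + 1 + 1) := Nat.fib_mono (by omega)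
    have h2 : Nat.fib (2 * (k + 1) + 1) = Nat.fib (2 * k + 1) + Nat.fib (2 * k + 1 + 1) := by
      rw [show 2 * (k + 1) + 1 = (2 * k + 1) + 2 from by ring, Nat.fib_add_two]
    calc 2 ^ (k + 1) = 2 ^ k + 2 ^ k := by ring
    _ ≤ Nat.fib (2 * (k + 1) + 1) := by omega


theorem stmt_6 : ∃ C : ℝ, 0 < C ∧ ∀ n : ℕ, 2 ≤ n → Even n →
    ∀ p q : ℕ, p.Prime → q.Prime →
      (Nat.fib n : ℝ) / (Nat.fib (n - 1) : ℝ) < Real.log q / Real.log p →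
      Real.log q / Real.log p < (Nat.fib (n + 1) : ℝ) / (Nat.fib n : ℝ) →
      ({x : Fin (n + 1) → ℕ | (∑ i, x i * Nat.fib (i.val + 1) = Nat.fib (n + 1)) ∧
          (∑ i, x i * Nat.fib i.val = Nat.fib n)}.Finite ∧
        Real.log (({x : Fin (n + 1) → ℕ |
            (∑ i, x i * Nat.fib (i.val + 1) = Nat.fib (n + 1)) ∧
            (∑ i, x i * Nat.fib i.val = Nat.fib n)}.ncard : ℝ)) ≤
          C * (Real.log (Nat.fib (n + 1) : ℝ)) ^ 2) := by
  refine ⟨16, by norm_num, fun n hn2 heven p q hp hq h1 h2 => ?_⟩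
  set F := Nat.fib (n + 1) with hF
  set S : Set (Fin (n + 1) → ℕ) :=
    {x : Fin (n + 1) → ℕ | (∑ i, x i * Nat.fib (i.val + 1) = Nat.fib (n + 1)) ∧
      (∑ i, x i * Nat.fib i.val = Nat.fib n)} with hS
  have hF2 : 2 ≤ F := by
    have : Nat.fib 3 ≤ Nat.fib (n + 1) := Nat.fib_mono (by omega)
    simpa [show Nat.fib 3 = 2 from rfl] using this
  -- coordinate bound
  have hbound : ∀ x ∈ S, ∀ i, x i < F + 1 := by
    intro x hx i
    have h := hx.1
    have hle : x i * Nat.fib (i.val + 1) ≤ ∑ j, x j * Nat.fib (j.val + 1) :=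
      Finset.single_le_sum (f := fun j : Fin (n+1) => x j * Nat.fib (j.val + 1)) (fun j _ => Nat.zero_le _) (Finset.mem_univ i)
    have hfibpos : 1 ≤ Nat.fib (i.val + 1) := Nat.fib_pos.2 (by omega)
    calc x i ≤ x i * Nat.fib (i.val + 1) := Nat.le_mul_of_pos_right _ hfibpos
    _ ≤ F := hle.trans_eq h
    _ < F + 1 := Nat.lt_succ_self _
  -- finiteness
  have hfin : S.Finite := by
    apply Set.Finite.subset (Set.Finite.pi (t := fun _ : Fin (n+1) => Set.Iic F)
      (fun _ => Set.finite_Iic F))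
    intro x hx
    rw [Set.mem_univ_pi]
    intro i
    exact Set.mem_Iic.2 (Nat.lt_succ_iff.1 (hbound x hx i))
  refine ⟨hfin, ?_⟩
  -- cardinality bound
  have hcard : S.ncard ≤ (F + 1) ^ (n + 1) := by
    rw [← Nat.card_coe_set_eq]
    have hinj : Function.Injective
        (fun x : S => fun i => (⟨x.1 i, hbound x.1 x.2 i⟩ : Fin (F + 1))) := by
      intro x y hxy
      apply Subtype.ext
      funext i
      have := congrFun hxy i
      simpa [Fin.mk.injEq] using this
    have := Nat.card_le_card_of_injective _ hinj
    simpa [Nat.card_eq_fintype_card] using this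
  -- log estimates
  have hFpos : (0 : ℝ) < F := by positivity
  have hF2R : (2 : ℝ) ≤ (F : ℝ) := by exact_mod_cast hF2
  have hlogF : Real.log 2 ≤ Real.log F := Real.log_le_log (by norm_num) hF2R
  have hlog2 : (0.6931471803 : ℝ) < Real.log 2 := Real.log_two_gt_d9
  -- n ≤ 4 log F
  obtain ⟨k, hk⟩ := heven
  have hfibk : 2 ^ k ≤ F := by
    have := two_pow_le_fib k
    have hnk : 2 * k = n := by omega
    rwa [hnk] at this
  have hklog : (k : ℝ) * Real.log 2 ≤ Real.log F := by
    have : Real.log ((2 : ℝ) ^ k) ≤ Real.log F :=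
      Real.log_le_log (by positivity) (by exact_mod_cast hfibk)
    rwa [Real.log_pow] at this
  have hn4 : (n : ℝ) ≤ 4 * Real.log F := by
    have hkR : (n : ℝ) = 2 * (k : ℝ) := by
      have : n = 2 * k := by omega
      exact_mod_cast this
    nlinarith [hklog, hlog2, Nat.cast_nonneg (α := ℝ) k]
  -- log (F+1) ≤ 2 log F
  have hlogF1 : Real.log ((F : ℝ) + 1) ≤ 2 * Real.log F := by
    have h1' : ((F : ℝ) + 1) ≤ (F : ℝ) ^ 2 := by nlinarith
    have := Real.log_le_log (by positivity) h1'
    rwa [Real.log_pow] at this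
    
  -- main chain
  have hmain : Real.log (S.ncard : ℝ) ≤ (n + 1 : ℝ) * Real.log ((F : ℝ) + 1) := by
    rcases Nat.eq_zero_or_pos S.ncard with h0 | hpos
    · rw [h0]
      simp only [Nat.cast_zero, Real.log_zero]
      have : (0 : ℝ) ≤ Real.log ((F : ℝ) + 1) :=
        Real.log_nonneg (by linarith)
      positivity
    · have hc : (S.ncard : ℝ) ≤ ((F : ℝ) + 1) ^ (n + 1) := by
        have : ((F + 1) ^ (n + 1) : ℕ) = (((F : ℝ) + 1) ^ (n + 1) : ℝ) := by push_cast; ring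
        calc (S.ncard : ℝ) ≤ ((F + 1) ^ (n + 1) : ℕ) := by exact_mod_cast hcard
        _ = _ := this
      have := Real.log_le_log (by exact_mod_cast hpos) hc
      rwa [Real.log_pow, Nat.cast_add, Nat.cast_one] at this
  have hlogFpos : (0 : ℝ) < Real.log F := by linarith
  calc Real.log (S.ncard : ℝ) ≤ (n + 1 : ℝ) * Real.log ((F : ℝ) + 1) := hmain
  _ ≤ 16 * Real.log F ^ 2 := by nlinarith [Real.log_nonneg (by linarith : (1:ℝ) ≤ (F:ℝ) + 1)]
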